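/- Every non-subgame-dominated strategy is subgame winning: if for no history h there is a strategy that weakly dominates σ_∃ from h, then for every history h such that some strategy σ' satisfies Out_h(σ') ⊆ L, we have Out_h(σ_∃) ⊆ L. -/

import Mathlib

open scoped Classical

universe u v

variable {I : Type u} {O : Type v}

/-- The finite (even) history consisting of the first `n` (input, output) pairs of a word.
A word in `(Σ_I · Σ_O)^ω` is modelled as `w : ℕ → I × O`, where round `n` consists of the
input letter `(w n).1` followed by the output letter `(w n).2`. -/
def wpref (w : ℕ → I × O) (n : ℕ) : List (I × O) := (List.range n).map w

/-- Outcomes of a controller strategy `σ : (Σ_I·Σ_O)^*·Σ_I → Σ_O`. -/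
def OutC (σ : List (I × O) → I → O) : Set (ℕ → I × O) :=
  {w | ∀ n, (w n).2 = σ (wpref w n) (w n).1}

/-- Outcomes of an environment strategy `τ : (Σ_I·Σ_O)^* → Σ_I`. -/
def OutE (τ : List (I × O) → I) : Set (ℕ → I × O) :=
  {w | ∀ n, (w n).1 = τ (wpref w n)}

/-- Input projection `π_I`. -/
def inputProj (w : ℕ → I × O) : ℕ → I := fun n => (w n).1

/-- `A` is an input assumption: closed under changing output letters. -/
def IsInputAssumption (A : Set (ℕ → I × O)) : Prop :=
  ∀ w w' : ℕ → I × O, inputProj w = inputProj w' → w ∈ A → w' ∈ A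

/-- Cylinder `h·(Σ_I·Σ_O)^ω` of an even history `h`. -/
def cylE (h : List (I × O)) : Set (ℕ → I × O) := {w | wpref w h.length = h}

/-- Cylinder of a general history: an even part plus possibly a pending input letter. -/
def cylH (h : List (I × O) × Option I) : Set (ℕ → I × O) :=
  {w | wpref w h.1.length = h.1 ∧ ∀ i, h.2 = some i → (w h.1.length).1 = i}

/-- A scenario is coherent: no history is a prefix of two words of `S`
that agree on the next input but disagree on the next output. -/
def Coherent (S : Set (ℕ → I × O)) : Prop :=
  ∀ w ∈ S, ∀ w' ∈ S, ∀ n, wpref w n = wpref w' n → (w n).1 = (w' n).1 → (w n).2 = (w' n).2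

/-- The strategy `[S → σ]`: follow a word of the scenario `S` extending the current
history if one exists, and otherwise play `σ`. -/
noncomputable def shiftStrat (S : Set (ℕ → I × O))
    (σ : List (I × O) → I → O) : List (I × O) → I → O := fun h i =>
  if hex : ∃ w, w ∈ S ∧ wpref w h.length = h ∧ (w h.length).1 = i
  then (hex.choose h.length).2
  else σ h i

/-- `EA(σ) = L ∪ ((Σ_I·Σ_O)^ω \ Out(σ))`. -/
def EA (L : Set (ℕ → I × O)) (σ : List (I × O) → I → O) : Set (ℕ → I × O) :=
  L ∪ (OutC σ)ᶜ

/-- The words doomed for `σ`: some even-length prefix extends to an outcome of `σ`,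
but no outcome of `σ` extending that prefix is in `L`. -/
def Doomed (L : Set (ℕ → I × O)) (σ : List (I × O) → I → O) : Set (ℕ → I × O) :=
  {w | ∃ k, (OutC σ ∩ cylE (wpref w k)).Nonempty ∧ OutC σ ∩ cylE (wpref w k) ∩ L = ∅}

/-- `EA⁻(σ) = EA(σ) \ Doomed(σ)`. -/
def EAminus (L : Set (ℕ → I × O)) (σ : List (I × O) → I → O) : Set (ℕ → I × O) :=
  EA L σ \ Doomed L σ

/-- `A` is sufficient for the specification `L` (for some controller strategy). -/
def Sufficient (L A : Set (ℕ → I × O)) : Prop :=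
  ∃ σ : List (I × O) → I → O, OutC σ ∩ A ⊆ L

/-- `A` is output-restrictive. -/
def OutputRestrictive (A : Set (ℕ → I × O)) : Prop :=
  ∃ (h : List (I × O)) (σ : List (I × O) → I → O),
    (A ∩ cylE h).Nonempty ∧ (OutC σ ∩ cylE h).Nonempty ∧ A ∩ OutC σ ∩ cylE h = ∅

/-- The even history of length `n` produced jointly by controller `σ` and environment `τ`. -/
def playH (σ : List (I × O) → I → O) (τ : List (I × O) → I) : ℕ → List (I × O)
  | 0 => []
  | n+1 =>
      let g := playH σ τ n
      g ++ [(τ g, σ g (τ g))]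

/-- The unique joint outcome `Out(σ, τ)`. -/
def play (σ : List (I × O) → I → O) (τ : List (I × O) → I) : ℕ → I × O := fun n =>
  let g := playH σ τ n
  (τ g, σ g (τ g))

/-- History construction when the controller follows `σ` against the fixed input word `u`. -/
def playIH (σ : List (I × O) → I → O) (u : ℕ → I) : ℕ → List (I × O)
  | 0 => []
  | n+1 =>
      let g := playIH σ u n
      g ++ [(u n, σ g (u n))]

/-- The unique outcome `Out(σ, u)` of `σ` against the input word `u`. -/
def playI (σ : List (I × O) → I → O) (u : ℕ → I) : ℕ → I × O := fun n =>
  (u n, σ (playIH σ u n) (u n))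

/-- Outcomes extending the history `h` and following `σ` afterwards, `Out_h(σ)`. -/
def OutFrom (σ : List (I × O) → I → O) (h : List (I × O) × Option I) :
    Set (ℕ → I × O) :=
  {w | wpref w h.1.length = h.1 ∧ (∀ i, h.2 = some i → (w h.1.length).1 = i) ∧
       ∀ n, h.1.length ≤ n → (w n).2 = σ (wpref w n) (w n).1}

/-- Even histories extending the finite history `b`, following `σ` and `τ`. -/
def extH (σ : List (I × O) → I → O) (τ : List (I × O) → I)
    (b : List (I × O)) : ℕ → List (I × O)
  | 0 => b
  | n+1 =>
      let g := extH σ τ b n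
      g ++ [(τ g, σ g (τ g))]

/-- The unique word extending `b` and following `σ` and `τ` afterwards. -/
def extPlay (σ : List (I × O) → I → O) (τ : List (I × O) → I)
    (b : List (I × O)) : ℕ → I × O := fun n =>
  if hn : n < b.length then b.get ⟨n, hn⟩
  else
    let g := extH σ τ b (n - b.length)
    (τ g, σ g (τ g))

/-- The even history obtained from the general history `h`, letting `σ` answer a
pending input letter if there is one. -/
def histBase (σ : List (I × O) → I → O) (h : List (I × O) × Option I) :
    List (I × O) :=
  match h.2 with
  | none => h.1
  | some i => h.1 ++ [(i, σ h.1 i)]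

/-- `Out_h(σ, τ)`: the unique word extending `h`, following `σ` and `τ` afterwards. -/
def playFrom (σ : List (I × O) → I → O) (τ : List (I × O) → I)
    (h : List (I × O) × Option I) : ℕ → I × O :=
  extPlay σ τ (histBase σ h)

/-- `σ` is strongly winning for `L`. -/
def StronglyWinning (L : Set (ℕ → I × O)) (σ : List (I × O) → I → O) : Prop :=
  ∀ h : List (I × O) × Option I,
    (∃ σ' : List (I × O) → I → O, (OutC σ' ∩ cylH h).Nonempty ∧ OutC σ' ∩ cylH h ⊆ L) →
    OutC σ ∩ cylH h ⊆ L

/-- `σ` is subgame winning for `L`. -/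
def SubgameWinning (L : Set (ℕ → I × O)) (σ : List (I × O) → I → O) : Prop :=
  ∀ h : List (I × O) × Option I,
    (∃ σ' : List (I × O) → I → O, OutFrom σ' h ⊆ L) → OutFrom σ h ⊆ L

section Aux18
variable {I : Type u} {O : Type v}

lemma wpref_length (w : ℕ → I × O) (n : ℕ) : (wpref w n).length = n := by
  simp [wpref]

lemma wpref_succ (w : ℕ → I × O) (n : ℕ) :
    wpref w (n+1) = wpref w n ++ [w n] := by
  simp [wpref, List.range_succ]

lemma wpref_take (w : ℕ → I × O) {m n : ℕ} (hmn : m ≤ n) :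
    (wpref w n).take m = wpref w m := by
  simp only [wpref]
  rw [← List.map_take, List.take_range, Nat.min_eq_left hmn]

lemma wpref_get (w : ℕ → I × O) {n : ℕ} (k : ℕ) (hk : k < (wpref w n).length) :
    (wpref w n).get ⟨k, hk⟩ = w k := by
  simp [wpref]

lemma wpref_extPlay_base (σ : List (I × O) → I → O) (τ : List (I × O) → I)
    (b : List (I × O)) : wpref (extPlay σ τ b) b.length = b := by
  apply List.ext_get
  · simp [wpref_length]
  · intro k h1 h2
    rw [wpref_get]
    have hk : k < b.length := h2
    simp [extPlay, hk]

lemma wpref_extPlay (σ : List (I × O) → I → O) (τ : List (I × O) → I)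
    (b : List (I × O)) (n : ℕ) :
    wpref (extPlay σ τ b) (b.length + n) = extH σ τ b n := by
  induction n with
  | zero => simpa [extH] using wpref_extPlay_base σ τ b
  | succ n ih =>
      have h1 : b.length + (n+1) = (b.length + n) + 1 := by omega
      rw [h1, wpref_succ, ih]
      have hnl : ¬ (b.length + n < b.length) := by omega
      simp only [extH, extPlay, hnl, dif_neg, not_false_iff]
      congr 2
      all_goals simp

lemma histBase_spec (σ : List (I × O) → I → O) (h : List (I × O) × Option I) :
    h.1.length ≤ (histBase σ h).length ∧ (histBase σ h).take h.1.length = h.1 := by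
  rcases h with ⟨g, (_|i)⟩ <;> simp [histBase]

/-- `playFrom σ τ h ∈ OutFrom σ h`. -/
lemma playFrom_mem_OutFrom (σ : List (I × O) → I → O) (τ : List (I × O) → I)
    (h : List (I × O) × Option I) : playFrom σ τ h ∈ OutFrom σ h := by
  set b := histBase σ h with hb
  have hpre := histBase_spec σ h
  rw [← hb] at hpre
  have hwb : wpref (playFrom σ τ h) b.length = b := wpref_extPlay_base σ τ b
  have hwh : wpref (playFrom σ τ h) h.1.length = h.1 := by
    rw [← wpref_take _ hpre.1, hwb, hpre.2]
  refine ⟨hwh, ?_, ?_⟩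
  · rintro i hi
    rcases h with ⟨g, o⟩
    cases o with
    | none => simp at hi
    | some j =>
        cases hi
        have hb' : b = g ++ [(i, σ g i)] := by simp [hb, histBase]
        have hlt : g.length < b.length := by simp [hb']
        have hget : b.get ⟨g.length, hlt⟩ = (i, σ g i) := by simp [hb']
        show (extPlay σ τ b g.length).1 = i
        simp only [extPlay, hlt, dif_pos, hget]
  · intro n hn
    by_cases hnb : n < b.length
    · rcases h with ⟨g, o⟩
      cases o with
      | none =>
          exfalso
          have hbl : b.length = g.length := by simp [hb, histBase]
          have hgn : (g, (none : Option I)).1.length = g.length := rfl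
          omega
      | some i =>
          have hb' : b = g ++ [(i, σ g i)] := by simp [hb, histBase]
          have hn' : n = g.length := by
            have hbl : b.length = g.length + 1 := by simp [hb']
            simp at hn; omega
          subst hn'
          have hlt : g.length < b.length := hnb
          have hget : b.get ⟨g.length, hlt⟩ = (i, σ g i) := by simp [hb']
          have hw : playFrom σ τ (g, some i) g.length = (i, σ g i) := by
            show extPlay σ τ b g.length = _
            simp only [extPlay, hlt, dif_pos, hget]
          have hwh' : wpref (playFrom σ τ (g, some i)) g.length = g := hwh
          rw [hwh', hw]
    · push_neg at hnb
      obtain ⟨m, rfl⟩ := Nat.exists_eq_add_of_le hnb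
      have hwp : wpref (playFrom σ τ h) (b.length + m) = extH σ τ b m :=
        wpref_extPlay σ τ b m
      have hnl : ¬ (b.length + m < b.length) := by omega
      have hval : playFrom σ τ h (b.length + m)
          = (τ (extH σ τ b m), σ (extH σ τ b m) (τ (extH σ τ b m))) := by
        show extPlay σ τ b _ = _
        simp only [extPlay, hnl, dif_neg, not_false_iff, Nat.add_sub_cancel_left]
      rw [hwp, hval]

/-- Any outcome of `σ` from `h` is the play against its own input strategy. -/
lemma OutFrom_eq_playFrom {σ : List (I × O) → I → O} {h : List (I × O) × Option I}
    {w : ℕ → I × O} (hw : w ∈ OutFrom σ h) :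
    playFrom σ (fun g => (w g.length).1) h = w := by
  obtain ⟨hw1, hw2, hw3⟩ := hw
  set τ : List (I × O) → I := fun g => (w g.length).1 with hτ
  set b := histBase σ h with hb
  have hpre := histBase_spec σ h
  rw [← hb] at hpre
  have hstep1 : wpref w b.length = b := by
    rcases h with ⟨g, o⟩
    cases o with
    | none => simpa [hb, histBase] using hw1
    | some i =>
        have hb' : b = g ++ [(i, σ g i)] := by simp [hb, histBase]
        have hbl : b.length = g.length + 1 := by simp [hb']
        rw [hbl, wpref_succ]
        have hi : (w g.length).1 = i := hw2 i rfl
        have ho : (w g.length).2 = σ g i := by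
          have := hw3 g.length (le_refl _)
          rw [hw1, hi] at this; exact this
        have hpair : w g.length = (i, σ g i) := by
          rw [← ho, ← hi]
        rw [hw1, hpair, hb']
  have hstep2 : ∀ n, extH σ τ b n = wpref w (b.length + n) := by
    intro n
    induction n with
    | zero => simpa [extH] using hstep1.symm
    | succ n ih =>
        have hm : b.length + (n+1) = (b.length + n) + 1 := by omega
        rw [hm, wpref_succ]
        have hlen : (wpref w (b.length + n)).length = b.length + n :=
          wpref_length w _
        have hτg : τ (wpref w (b.length + n)) = (w (b.length + n)).1 := by
          rw [hτ]; simp [hlen]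
        have hσg : σ (wpref w (b.length + n)) ((w (b.length + n)).1)
            = (w (b.length + n)).2 := by
          exact (hw3 (b.length + n) (by omega)).symm
        show extH σ τ b n ++ _ = _
        rw [ih]
        congr 1
        rw [hτg]
        rw [hσg]
  funext n
  show extPlay σ τ b n = w n
  by_cases hnb : n < b.length
  · simp only [extPlay, hnb, dif_pos]
    rw [List.get_of_eq hstep1.symm ⟨n, hnb⟩, wpref_get]
  · push_neg at hnb
    obtain ⟨m, rfl⟩ := Nat.exists_eq_add_of_le hnb
    have hnl : ¬ (b.length + m < b.length) := by omega
    simp only [extPlay, hnl, dif_neg, not_false_iff]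
    rw [Nat.add_sub_cancel_left, hstep2]
    have hlen : (wpref w (b.length + m)).length = b.length + m := wpref_length w _
    have hτg : τ (wpref w (b.length + m)) = (w (b.length + m)).1 := by
      rw [hτ]; simp [hlen]
    have hσg : σ (wpref w (b.length + m)) ((w (b.length + m)).1)
        = (w (b.length + m)).2 := (hw3 (b.length + m) (by omega)).symm
    rw [hτg, hσg]
end Aux18

/-- a non-subgame-dominated strategy is subgame winning. -/
theorem nonSubgameDominated_subgameWinning
    (L : Set (ℕ → I × O)) (σ : List (I × O) → I → O)
    (hnd : ∀ (h : List (I × O) × Option I) (σ' : List (I × O) → I → O),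
      ¬ ((∀ τ : List (I × O) → I, playFrom σ τ h ∈ L → playFrom σ' τ h ∈ L) ∧
         ¬ (∀ τ : List (I × O) → I, playFrom σ' τ h ∈ L → playFrom σ τ h ∈ L))) :
    SubgameWinning L σ := by
  rintro h ⟨σ', hσ'⟩ w hw
  have hP : ∀ τ : List (I × O) → I, playFrom σ τ h ∈ L → playFrom σ' τ h ∈ L :=
    fun τ _ => hσ' (playFrom_mem_OutFrom σ' τ h)
  have hQ : ∀ τ : List (I × O) → I, playFrom σ' τ h ∈ L → playFrom σ τ h ∈ L := by
    by_contra hq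
    exact hnd h σ' ⟨hP, hq⟩
  have hin := hQ (fun g => (w g.length).1)
    (hσ' (playFrom_mem_OutFrom σ' (fun g => (w g.length).1) h))
  rwa [OutFrom_eq_playFrom hw] at hin
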